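/- arXiv:1504.00650 — 3 statements merged into one kernel-verified Lean document; each statement's English description precedes it below -/
import Mathlib

section
/- The Stieltjes transform m_sc of the semicircle law satisfies the self-consistent equation m_sc(z) = −1/(m_sc(z) + z) for all z in the upper half plane. -/
open MeasureTheory Complex

/-- Density of the semicircle law. -/
noncomputable def semicircleDensity (x : ℝ) : ℝ := (1 / (2 * Real.pi)) * Real.sqrt (max (4 - x ^ 2) 0)

/-- Stieltjes transform of the semicircle law. -/
noncomputable def mSC (z : ℂ) : ℂ := ∫ x : ℝ, (semicircleDensity x : ℂ) / ((x : ℂ) - z)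

namespace MSCAux

noncomputable def sR (x : ℝ) : ℝ := Real.sqrt (4 - x ^ 2)
noncomputable def tR (x : ℝ) : ℝ := x / (2 + sR x)
noncomputable def qC (z : ℂ) : ℂ := (4 - z ^ 2) ^ (((2:ℕ) : ℂ))⁻¹
noncomputable def tp (z : ℂ) : ℂ := (2 + qC z) / z
noncomputable def tm (z : ℂ) : ℂ := (2 - qC z) / z
noncomputable def G (z : ℂ) (x : ℝ) : ℂ :=
  (2 * (Real.pi : ℂ))⁻¹ * ((sR x : ℂ) - z * (Real.arcsin (x / 2) : ℂ)
    + qC z * (Complex.log ((tR x : ℂ) - tm z) - Complex.log ((tR x : ℂ) - tp z)))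

lemma hq2 (z : ℂ) : qC z ^ 2 = 4 - z ^ 2 :=
  Complex.cpow_nat_inv_pow (4 - z ^ 2) two_ne_zero

lemma root_im {z τ : ℂ} (hz : 0 < z.im) (h : z * (τ ^ 2 + 1) = 4 * τ) : τ.im ≠ 0 := by
  intro h0
  have hτ : τ = (τ.re : ℂ) := Complex.ext rfl (by simp [h0])
  rw [hτ] at h
  have him := congrArg Complex.im h
  have h1 : ((τ.re:ℂ) ^ 2 + 1).im = 0 := by norm_cast
  have h2 : ((τ.re:ℂ) ^ 2 + 1).re = τ.re ^ 2 + 1 := by norm_cast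
  rw [Complex.mul_im, h1, h2] at him
  simp at him
  rcases him with h3 | h3
  · exact absurd h3 (ne_of_gt hz)
  · nlinarith [sq_nonneg τ.re]

lemma zne {z : ℂ} (hz : 0 < z.im) : z ≠ 0 := by
  intro h; rw [h] at hz; simp at hz

lemma tp_im {z : ℂ} (hz : 0 < z.im) : (tp z).im ≠ 0 := by
  apply root_im hz
  have hzne := zne hz
  rw [tp]
  field_simp
  linear_combination hq2 z

lemma tm_im {z : ℂ} (hz : 0 < z.im) : (tm z).im ≠ 0 := by
  apply root_im hz
  have hzne := zne hz
  rw [tm]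
  field_simp
  linear_combination hq2 z

lemma sub_im_ne {τ : ℂ} (hτ : τ.im ≠ 0) (r : ℝ) : ((r : ℂ) - τ).im ≠ 0 := by
  simpa using fun h => hτ (by linarith [h])

lemma sub_slit {τ : ℂ} (hτ : τ.im ≠ 0) (r : ℝ) : ((r : ℂ) - τ) ∈ Complex.slitPlane :=
  Complex.mem_slitPlane_iff.2 (Or.inr (sub_im_ne hτ r))

lemma sub_ne {τ : ℂ} (hτ : τ.im ≠ 0) (r : ℝ) : ((r : ℂ) - τ) ≠ 0 := by
  intro h
  exact sub_im_ne hτ r (by rw [h]; simp)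

theorem algGoal {X Z S Q : ℂ} (hS0 : S ≠ 0) (hS2 : (2:ℂ) + S ≠ 0) (hXZ : X - Z ≠ 0) (hZ : Z ≠ 0)
    (ha : X / (2+S) - (2-Q)/Z ≠ 0) (hb : X / (2+S) - (2+Q)/Z ≠ 0)
    (hS : S ^ 2 = 4 - X ^ 2) (hQ : Q ^ 2 = 4 - Z ^ 2) :
    -X / S - Z * (1 / S)
      + Q * ((2 / (S * (2+S))) / (X / (2+S) - (2-Q)/Z)
           - (2 / (S * (2+S))) / (X / (2+S) - (2+Q)/Z)) = S / (X - Z) := by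
  set a := X / (2+S) - (2-Q)/Z with hadef
  set b := X / (2+S) - (2+Q)/Z with hbdef
  have hprod : a * b = 4 * (Z - X) / (Z * (2+S)) := by
    rw [hadef, hbdef]
    field_simp
    ring_nf
    linear_combination (-4*S - S^2 - 4) * hQ + Z^2 * hS
  have hba : b - a = -2*Q/Z := by rw [hadef, hbdef]; field_simp; ring
  have hdiff : 2 / (S * (2+S)) / a - 2 / (S * (2+S)) / b
      = (2 / (S * (2+S))) * (b - a) / (a * b) := by
    field_simp
  rw [hdiff, hba, hprod]
  have hZX : Z - X ≠ 0 := fun h => hXZ (by linear_combination -h)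
  have h3 : 2 / (S * (2+S)) * (-2*Q/Z) / (4*(Z-X)/(Z*(2+S))) = -Q/(S*(Z-X)) := by
    rw [div_div_eq_mul_div]
    field_simp
    ring
  rw [h3]
  field_simp
  ring_nf
  linear_combination (Z-X) * hQ + (X-Z) * hS

lemma xz_ne {z : ℂ} (hz : 0 < z.im) (x : ℝ) : (x : ℂ) - z ≠ 0 := by
  intro h
  have := congrArg Complex.im h
  simp at this
  linarith

lemma G_hasDeriv (z : ℂ) (hz : 0 < z.im) {x : ℝ} (hx : x ∈ Set.Ioo (-2:ℝ) 2) :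
    HasDerivAt (G z) ((semicircleDensity x : ℂ) / ((x:ℂ) - z)) x := by
  obtain ⟨hx1, hx2⟩ := hx
  have hx4 : 0 < 4 - x ^ 2 := by nlinarith
  have hs_pos : 0 < sR x := Real.sqrt_pos.2 hx4
  have hs2 : sR x ^ 2 = 4 - x ^ 2 := Real.sq_sqrt hx4.le
  have h2s : (0:ℝ) < 2 + sR x := by linarith
  -- derivative of sR
  have hs : HasDerivAt sR (-x / sR x) x := by
    have h1 : HasDerivAt (fun y : ℝ => 4 - y ^ 2) (-(2 * x)) x := by
      simpa using ((hasDerivAt_pow 2 x).const_sub 4)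
    have h2 := (Real.hasDerivAt_sqrt (ne_of_gt hx4)).comp x h1
    have : 1 / (2 * Real.sqrt (4 - x ^ 2)) * -(2 * x) = -x / sR x := by
      rw [sR]
      field_simp
    rw [← this]
    exact h2
  -- derivative of arcsin (x/2)
  have harc : HasDerivAt (fun y : ℝ => Real.arcsin (y / 2)) (1 / sR x) x := by
    have h1 : HasDerivAt (fun y : ℝ => y / 2) (1 / 2) x := (hasDerivAt_id x).div_const 2
    have hne1 : x / 2 ≠ -1 := by intro h; nlinarith [h]
    have hne2 : x / 2 ≠ 1 := by intro h; nlinarith [h]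
    have h2 := (Real.hasDerivAt_arcsin hne1 hne2).comp x h1
    have hsq : Real.sqrt (1 - (x / 2) ^ 2) = sR x / 2 := by
      rw [show 1 - (x / 2) ^ 2 = (4 - x ^ 2) / 4 by ring, Real.sqrt_div hx4.le, sR,
        show (4:ℝ) = 2 ^ 2 by norm_num, Real.sqrt_sq (by norm_num : (0:ℝ) ≤ 2)]
    have : 1 / Real.sqrt (1 - (x / 2) ^ 2) * (1 / 2) = 1 / sR x := by
      rw [hsq]; field_simp
    rw [← this]
    exact h2
  -- derivative of tR
  have hts : HasDerivAt tR (2 / (sR x * (2 + sR x))) x := by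
    have h1 : HasDerivAt (fun y : ℝ => 2 + sR y) (-x / sR x) x := hs.const_add 2
    have h2 := (hasDerivAt_id x).div h1 (ne_of_gt h2s)
    have : (1 * (2 + sR x) - x * (-x / sR x)) / (2 + sR x) ^ 2 = 2 / (sR x * (2 + sR x)) := by
      field_simp
      ring_nf
      linear_combination hs2
    rw [← this]
    exact h2
  -- complex pieces
  have htpim := tp_im hz
  have htmim := tm_im hz
  have hlog1 : HasDerivAt (fun y : ℝ => Complex.log ((tR y : ℂ) - tm z))
      ((↑(2 / (sR x * (2 + sR x))) : ℂ) / ((tR x : ℂ) - tm z)) x :=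
    HasDerivAt.clog_real ((hts.ofReal_comp).sub_const (tm z)) (sub_slit htmim _)
  have hlog2 : HasDerivAt (fun y : ℝ => Complex.log ((tR y : ℂ) - tp z))
      ((↑(2 / (sR x * (2 + sR x))) : ℂ) / ((tR x : ℂ) - tp z)) x :=
    HasDerivAt.clog_real ((hts.ofReal_comp).sub_const (tp z)) (sub_slit htpim _)
  have hcomb : HasDerivAt (G z)
      ((2 * (Real.pi : ℂ))⁻¹ * ((↑(-x / sR x) : ℂ) - z * (↑(1 / sR x) : ℂ)
        + qC z * ((↑(2 / (sR x * (2 + sR x))) : ℂ) / ((tR x : ℂ) - tm z)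
                - (↑(2 / (sR x * (2 + sR x))) : ℂ) / ((tR x : ℂ) - tp z)))) x := by
    exact (((hs.ofReal_comp).sub ((harc.ofReal_comp).const_mul z)).add
      ((hlog1.sub hlog2).const_mul (qC z))).const_mul _
  have hval : (2 * (Real.pi : ℂ))⁻¹ * ((↑(-x / sR x) : ℂ) - z * (↑(1 / sR x) : ℂ)
        + qC z * ((↑(2 / (sR x * (2 + sR x))) : ℂ) / ((tR x : ℂ) - tm z)
                - (↑(2 / (sR x * (2 + sR x))) : ℂ) / ((tR x : ℂ) - tp z)))
      = (semicircleDensity x : ℂ) / ((x:ℂ) - z) := by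
    have hS0 : ((sR x : ℝ) : ℂ) ≠ 0 := by
      norm_cast; exact ne_of_gt hs_pos
    have hS2 : (2:ℂ) + (sR x : ℂ) ≠ 0 := by
      exact_mod_cast ne_of_gt h2s
    have hXZ : (x:ℂ) - z ≠ 0 := xz_ne hz x
    have hZ : z ≠ 0 := zne hz
    have hacast : (x:ℂ) / (2 + (sR x : ℂ)) - (2 - qC z)/z = ((tR x : ℂ) - tm z) := by
      rw [tR, tm]; push_cast; ring
    have hbcast : (x:ℂ) / (2 + (sR x : ℂ)) - (2 + qC z)/z = ((tR x : ℂ) - tp z) := by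
      rw [tR, tp]; push_cast; ring
    have ha : (x:ℂ) / (2 + (sR x : ℂ)) - (2 - qC z)/z ≠ 0 := by
      rw [hacast]; exact sub_ne htmim _
    have hb : (x:ℂ) / (2 + (sR x : ℂ)) - (2 + qC z)/z ≠ 0 := by
      rw [hbcast]; exact sub_ne htpim _
    have hScast : ((sR x : ℝ) : ℂ) ^ 2 = 4 - (x:ℂ) ^ 2 := by
      exact_mod_cast hs2
    have key := algGoal hS0 hS2 hXZ hZ ha hb hScast (hq2 z)
    rw [hacast, hbcast] at key
    have hdens : (semicircleDensity x : ℂ) = (2 * (Real.pi : ℂ))⁻¹ * (sR x : ℂ) := by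
      rw [semicircleDensity, max_eq_left hx4.le, ← sR]
      push_cast
      field_simp
    rw [hdens]
    push_cast
    linear_combination (2 * (Real.pi : ℂ))⁻¹ * key
  rw [← hval]
  exact hcomb

end MSCAux

namespace MSCAux2
open MSCAux

lemma sR_cont : Continuous sR := Real.continuous_sqrt.comp (by continuity)

lemma sR_nonneg (x : ℝ) : 0 ≤ sR x := Real.sqrt_nonneg _

lemma tR_cont : Continuous tR :=
  continuous_id.div (continuous_const.add sR_cont)
    (fun x => by have := sR_nonneg x; positivity)

lemma G_cont {z : ℂ} (hz : 0 < z.im) : Continuous (G z) := by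
  unfold G
  refine continuous_const.mul (Continuous.add (Continuous.sub ?_ ?_) (continuous_const.mul (Continuous.sub ?_ ?_)))
  · exact Complex.continuous_ofReal.comp sR_cont
  · exact continuous_const.mul (Complex.continuous_ofReal.comp
      (Real.continuous_arcsin.comp (continuous_id.div_const 2)))
  · exact Continuous.clog ((Complex.continuous_ofReal.comp tR_cont).sub continuous_const)
      (fun x => sub_slit (tm_im hz) _)
  · exact Continuous.clog ((Complex.continuous_ofReal.comp tR_cont).sub continuous_const)
      (fun x => sub_slit (tp_im hz) _)

lemma dens_cont : Continuous semicircleDensity := by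
  unfold semicircleDensity
  exact continuous_const.mul (Real.continuous_sqrt.comp (by continuity))

lemma f_cont {z : ℂ} (hz : 0 < z.im) :
    Continuous (fun x : ℝ => (semicircleDensity x : ℂ) / ((x : ℂ) - z)) := by
  refine Continuous.div (Complex.continuous_ofReal.comp dens_cont)
    ((Complex.continuous_ofReal).sub continuous_const) (fun x => xz_ne hz x)

lemma dens_zero {x : ℝ} (h : 4 - x ^ 2 ≤ 0) : semicircleDensity x = 0 := by
  unfold semicircleDensity
  rw [max_eq_right h, Real.sqrt_zero, mul_zero]

lemma support_sub (z : ℂ) :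
    Function.support (fun x : ℝ => (semicircleDensity x : ℂ) / ((x : ℂ) - z)) ⊆ Set.Ioc (-2) 2 := by
  intro x hx
  rw [Function.mem_support] at hx
  by_contra h
  rw [Set.mem_Ioc] at h
  push_neg at h
  have h4 : 4 - x ^ 2 ≤ 0 := by
    rcases le_or_gt x (-2) with h1 | h1
    · nlinarith
    · nlinarith [h h1]
  apply hx
  rw [dens_zero h4]
  simp

lemma mSC_eq_G (z : ℂ) (hz : 0 < z.im) : mSC z = G z 2 - G z (-2) := by
  have hFTC := intervalIntegral.integral_eq_sub_of_hasDerivAt_of_tendsto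
    (by norm_num : (-2:ℝ) < 2) (fun x hx => G_hasDeriv z hz hx)
    ((f_cont hz).intervalIntegrable _ _)
    (((G_cont hz).tendsto (-2)).mono_left nhdsWithin_le_nhds)
    (((G_cont hz).tendsto 2).mono_left nhdsWithin_le_nhds)
  rw [← hFTC, mSC]
  exact (intervalIntegral.integral_eq_integral_of_support_subset (support_sub z)).symm

end MSCAux2

namespace MSCAux3
open MSCAux MSCAux2

lemma sR_two : sR 2 = 0 := by rw [sR]; norm_num

lemma sR_negtwo : sR (-2) = 0 := by rw [sR]; norm_num

lemma tR_two : tR 2 = 1 := by rw [tR, sR_two]; norm_num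

lemma tR_negtwo : tR (-2) = -1 := by rw [tR, sR_negtwo]; norm_num

lemma G_two (z : ℂ) : G z 2 = (2 * (Real.pi : ℂ))⁻¹ * (- z * ((Real.pi : ℂ) / 2)
    + qC z * (Complex.log (1 - tm z) - Complex.log (1 - tp z))) := by
  rw [G, sR_two, tR_two]
  norm_num [Real.arcsin_one]

lemma G_negtwo (z : ℂ) : G z (-2) = (2 * (Real.pi : ℂ))⁻¹ * (z * ((Real.pi : ℂ) / 2)
    + qC z * (Complex.log (-1 - tm z) - Complex.log (-1 - tp z))) := by
  rw [G, sR_negtwo, tR_negtwo]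
  norm_num [Real.arcsin_neg_one]

lemma argpair {a b : ℂ} (hab : a.im = b.im) (h : a.im ≠ 0) :
    |Complex.arg a - Complex.arg b| < Real.pi := by
  have hπ := Real.pi_pos
  rcases lt_or_gt_of_ne h with hneg | hpos
  · have ha1 : Complex.arg a < 0 := Complex.arg_neg_iff.2 hneg
    have hb1 : Complex.arg b < 0 := Complex.arg_neg_iff.2 (hab ▸ hneg)
    have ha2 := Complex.neg_pi_lt_arg a
    have hb2 := Complex.neg_pi_lt_arg b
    rw [abs_sub_lt_iff]
    constructor <;> linarith
  · have ha1 : ¬ Complex.arg a < 0 := by rw [Complex.arg_neg_iff]; linarith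
    have hb1 : ¬ Complex.arg b < 0 := by rw [Complex.arg_neg_iff, ← hab]; linarith
    have ha2 : Complex.arg a < Real.pi :=
      lt_of_le_of_ne (Complex.arg_le_pi a)
        (fun hc => h (Complex.arg_eq_pi_iff.1 hc).2)
    have hb2 : Complex.arg b < Real.pi :=
      lt_of_le_of_ne (Complex.arg_le_pi b)
        (fun hc => h (hab ▸ (Complex.arg_eq_pi_iff.1 hc).2))
    rw [abs_sub_lt_iff]
    push_neg at ha1 hb1
    constructor <;> linarith

lemma tptm (z : ℂ) (hz : 0 < z.im) : tp z * tm z = 1 := by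
  have hzne := zne hz
  rw [tp, tm]
  field_simp
  linear_combination -hq2 z

lemma L_sq {z : ℂ} (hz : 0 < z.im) :
    ((Complex.log (1 - tm z) - Complex.log (1 - tp z))
      - (Complex.log (-1 - tm z) - Complex.log (-1 - tp z))) ^ 2 = -(Real.pi : ℂ) ^ 2 := by
  have hπ := Real.pi_pos
  set u1 := 1 - tm z with hu1def
  set u2 := 1 - tp z with hu2def
  set u3 := -1 - tm z with hu3def
  set u4 := -1 - tp z with hu4def
  have himm := tm_im hz
  have himp := tp_im hz
  have hu1 : u1 ≠ 0 := by
    have := sub_ne himm (1:ℝ); rw [hu1def]; simpa using this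
  have hu2 : u2 ≠ 0 := by
    have := sub_ne himp (1:ℝ); rw [hu2def]; simpa using this
  have hu3 : u3 ≠ 0 := by
    have := sub_ne himm (-1:ℝ); rw [hu3def]; simpa using this
  have hu4 : u4 ≠ 0 := by
    have := sub_ne himp (-1:ℝ); rw [hu4def]; simpa using this
  set L := (Complex.log u1 - Complex.log u2) - (Complex.log u3 - Complex.log u4) with hLdef
  have hprod : u1 * u4 = -(u3 * u2) := by
    rw [hu1def, hu2def, hu3def, hu4def]
    linear_combination 2 * tptm z hz
  have hexp : Complex.exp L = -1 := by
    rw [hLdef, Complex.exp_sub, Complex.exp_sub, Complex.exp_sub,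
      Complex.exp_log hu1, Complex.exp_log hu2, Complex.exp_log hu3, Complex.exp_log hu4]
    field_simp
    linear_combination hprod
  have h1 : Complex.exp (L - (Real.pi : ℂ) * Complex.I) = 1 := by
    rw [Complex.exp_sub, hexp, Complex.exp_pi_mul_I]
    norm_num
  rw [Complex.exp_eq_one_iff] at h1
  obtain ⟨n, hn⟩ := h1
  have hL : L = (2 * (n:ℂ) + 1) * (Real.pi : ℂ) * Complex.I := by
    have := sub_eq_iff_eq_add.1 hn
    rw [this]; ring
  -- imaginary part of L
  have hLim : L.im = (Complex.arg u1 - Complex.arg u3) + (Complex.arg u4 - Complex.arg u2) := by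
    rw [hLdef]
    simp [Complex.sub_im, Complex.log_im]
    ring
  have hpair1 : |Complex.arg u1 - Complex.arg u3| < Real.pi := by
    apply argpair
    · rw [hu1def, hu3def]; simp
    · rw [hu1def]
      simpa using sub_im_ne himm (1:ℝ)
  have hpair2 : |Complex.arg u4 - Complex.arg u2| < Real.pi := by
    apply argpair
    · rw [hu4def, hu2def]; simp
    · rw [hu4def]
      simpa using sub_im_ne himp (-1:ℝ)
  have hbound : |L.im| < 2 * Real.pi := by
    rw [hLim]
    calc |(Complex.arg u1 - Complex.arg u3) + (Complex.arg u4 - Complex.arg u2)|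
        ≤ |Complex.arg u1 - Complex.arg u3| + |Complex.arg u4 - Complex.arg u2| := abs_add_le _ _
      _ < 2 * Real.pi := by linarith
  have hLim2 : L.im = (2 * (n:ℝ) + 1) * Real.pi := by
    rw [hL]
    simp [Complex.mul_im]
  rw [hLim2] at hbound
  have habs : |(2 * (n:ℝ) + 1)| < 2 := by
    rw [abs_mul, abs_of_pos hπ] at hbound
    exact lt_of_mul_lt_mul_right hbound hπ.le
  have hn1 : (2 * n + 1 : ℤ) = 1 ∨ (2 * n + 1 : ℤ) = -1 := by
    obtain ⟨hb1, hb2⟩ := abs_lt.1 habs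
    have hb1' : (-2 : ℤ) < 2 * n + 1 := by exact_mod_cast (by push_cast; linarith : ((-2 : ℤ) : ℝ) < ((2 * n + 1 : ℤ) : ℝ))
    have hb2' : (2 * n + 1 : ℤ) < 2 := by exact_mod_cast (by push_cast; linarith : ((2 * n + 1 : ℤ) : ℝ) < ((2:ℤ) : ℝ))
    omega
  have hsq : ((2 * (n:ℂ) + 1)) ^ 2 = 1 := by
    rcases hn1 with h | h
    · have : ((2 * n + 1 : ℤ) : ℂ) = 1 := by exact_mod_cast congrArg (fun m : ℤ => (m : ℂ)) h
      push_cast at this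
      rw [show (2 * (n:ℂ) + 1) = ((2:ℂ) * n + 1) by ring, this]; norm_num
    · have : ((2 * n + 1 : ℤ) : ℂ) = -1 := by exact_mod_cast congrArg (fun m : ℤ => (m : ℂ)) h
      push_cast at this
      rw [show (2 * (n:ℂ) + 1) = ((2:ℂ) * n + 1) by ring, this]; norm_num
  rw [hL]
  have hexpand : ((2 * (n:ℂ) + 1) * (Real.pi : ℂ) * Complex.I) ^ 2
      = (2 * (n:ℂ) + 1) ^ 2 * (Real.pi : ℂ) ^ 2 * Complex.I ^ 2 := by ring
  rw [hexpand, hsq, Complex.I_sq]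
  ring

end MSCAux3

theorem mSC_self_consistent (z : ℂ) (hz : 0 < z.im) :
    mSC z = - 1 / (mSC z + z) := by
  open MSCAux MSCAux2 MSCAux3 in
  have hπ : (Real.pi : ℂ) ≠ 0 := by exact_mod_cast Real.pi_ne_zero
  set L := (Complex.log (1 - MSCAux.tm z) - Complex.log (1 - MSCAux.tp z))
      - (Complex.log (-1 - MSCAux.tm z) - Complex.log (-1 - MSCAux.tp z)) with hLdef
  have hL2 : L ^ 2 = -(Real.pi : ℂ) ^ 2 := MSCAux3.L_sq hz
  have hq := MSCAux.hq2 z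
  have hm : mSC z = (2 * (Real.pi : ℂ))⁻¹ * (-(z * (Real.pi : ℂ)) + MSCAux.qC z * L) := by
    rw [MSCAux2.mSC_eq_G z hz, MSCAux3.G_two, MSCAux3.G_negtwo, hLdef]
    ring
  have hkey : mSC z * (mSC z + z) = -1 := by
    rw [hm]
    field_simp
    linear_combination L ^ 2 * hq + (4 - z ^ 2) * hL2
  have hne : mSC z + z ≠ 0 := by
    intro h
    rw [h, mul_zero] at hkey
    exact absurd hkey (by norm_num)
  rw [eq_div_iff hne]
  exact hkey
end

section
/- Entropy comparison of probabilities: if ν is a probability measure, f ≥ 0 with ∫ f dν = 1, and A is any measurable event, then (f ν)(A) ≤ ν(A) + √(2 S_ν(f)), where S_ν(f) = ∫ f log f dν. -/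
open MeasureTheory

private lemma entcomp_hasDerivAt_H (u : ℝ) (hu : u ≠ 0) :
    HasDerivAt (fun x : ℝ => (x + 1) * Real.log x - 2 * (x - 1))
      (Real.log u + (u + 1) * u⁻¹ - 2) u := by
  have h1 : HasDerivAt (fun x : ℝ => (x + 1) * Real.log x)
      (1 * Real.log u + (u + 1) * u⁻¹) u :=
    (((hasDerivAt_id u).add_const 1).mul (Real.hasDerivAt_log hu))
  have h2 : HasDerivAt (fun x : ℝ => 2 * (x - 1)) 2 u := by
    simpa using ((hasDerivAt_id u).sub_const 1).const_mul 2
  have h3 : HasDerivAt (fun x : ℝ => (x + 1) * Real.log x - 2 * (x - 1))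
      (1 * Real.log u + (u + 1) * u⁻¹ - 2) u := h1.sub h2
  rw [one_mul] at h3
  exact h3

private lemma entcomp_hasDerivAt_F (u : ℝ) (hu : u ≠ 0) :
    HasDerivAt (fun x : ℝ => (2 * x + 4) * (x * Real.log x - x + 1) - 3 * (x - 1) ^ 2)
      (4 * ((u + 1) * Real.log u - 2 * (u - 1))) u := by
  have hxlog : HasDerivAt (fun x : ℝ => x * Real.log x) (Real.log u + 1) u := by
    have h : HasDerivAt (fun x : ℝ => x * Real.log x) (1 * Real.log u + u * u⁻¹) u :=
      (hasDerivAt_id u).mul (Real.hasDerivAt_log hu)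
    rw [one_mul, mul_inv_cancel₀ hu] at h
    exact h
  have hinner : HasDerivAt (fun x : ℝ => x * Real.log x - x + 1) (Real.log u) u := by
    simpa using (hxlog.sub (hasDerivAt_id u)).add_const 1
  have hlin : HasDerivAt (fun x : ℝ => 2 * x + 4) 2 u := by
    simpa using ((hasDerivAt_id u).const_mul 2).add_const 4
  have hsq : HasDerivAt (fun x : ℝ => 3 * (x - 1) ^ 2) (3 * (2 * (u - 1))) u := by
    have : HasDerivAt (fun x : ℝ => (x - 1) ^ 2) (2 * (u - 1)) u := by
      have h : HasDerivAt (fun x : ℝ => (x - 1) ^ 2) (((2:ℕ):ℝ) * (u - 1) ^ (2 - 1) * 1) u :=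
        ((hasDerivAt_id u).sub_const 1).pow 2
      convert h using 1
      norm_num
    simpa [mul_comm, mul_assoc, mul_left_comm] using this.const_mul 3
  have : HasDerivAt (fun x : ℝ => (2 * x + 4) * (x * Real.log x - x + 1) - 3 * (x - 1) ^ 2)
      (2 * (u * Real.log u - u + 1) + (2 * u + 4) * Real.log u - 3 * (2 * (u - 1))) u :=
    (hlin.mul hinner).sub hsq
  convert this using 1
  ring

/-- H(u) = (u+1) log u - 2(u-1) is monotone on (0,∞). -/
private lemma entcomp_H_mono :
    MonotoneOn (fun x : ℝ => (x + 1) * Real.log x - 2 * (x - 1)) (Set.Ioi 0) := by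
  have hint : interior (Set.Ioi (0:ℝ)) = Set.Ioi 0 := interior_Ioi
  apply monotoneOn_of_deriv_nonneg (convex_Ioi 0)
  · intro x hx
    exact ((entcomp_hasDerivAt_H x (ne_of_gt hx)).continuousAt).continuousWithinAt
  · rw [hint]
    intro x hx
    exact ((entcomp_hasDerivAt_H x (ne_of_gt hx)).differentiableAt).differentiableWithinAt
  · rw [hint]
    intro x hx
    rw [(entcomp_hasDerivAt_H x (ne_of_gt hx)).deriv]
    have hx0 : x ≠ 0 := ne_of_gt hx
    have hlog : 1 - x⁻¹ ≤ Real.log x := Real.one_sub_inv_le_log_of_pos hx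
    have hx' : (x + 1) * x⁻¹ = 1 + x⁻¹ := by field_simp
    rw [hx']
    linarith

/-- Pointwise key inequality: 3(u-1)² ≤ (2u+4)(u log u - u + 1) for u ≥ 0. -/
private lemma entcomp_key (u : ℝ) (hu : 0 ≤ u) :
    3 * (u - 1) ^ 2 ≤ (2 * u + 4) * (u * Real.log u - u + 1) := by
  rcases eq_or_lt_of_le hu with h0 | hpos
  · rw [← h0]; norm_num
  set F : ℝ → ℝ := fun x => (2 * x + 4) * (x * Real.log x - x + 1) - 3 * (x - 1) ^ 2 with hF
  have hF1 : F 1 = 0 := by simp [hF]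
  have hH1 : ((1:ℝ) + 1) * Real.log 1 - 2 * ((1:ℝ) - 1) = 0 := by simp
  suffices h : 0 ≤ F u by simpa [hF] using h
  rcases le_or_gt 1 u with h1 | h1
  · -- F monotone on [1, ∞)
    have hmono : MonotoneOn F (Set.Ici 1) := by
      have hint : interior (Set.Ici (1:ℝ)) = Set.Ioi 1 := interior_Ici
      apply monotoneOn_of_deriv_nonneg (convex_Ici 1)
      · intro x hx
        have hx0 : x ≠ 0 := by
          have : (0:ℝ) < 1 := one_pos
          have := hx; simp only [Set.mem_Ici] at this; linarith
        exact ((entcomp_hasDerivAt_F x hx0).continuousAt).continuousWithinAt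
      · rw [hint]
        intro x hx
        have hx0 : x ≠ 0 := by simp only [Set.mem_Ioi] at hx; linarith
        exact ((entcomp_hasDerivAt_F x hx0).differentiableAt).differentiableWithinAt
      · rw [hint]
        intro x hx
        simp only [Set.mem_Ioi] at hx
        rw [(entcomp_hasDerivAt_F x (by linarith)).deriv]
        have := entcomp_H_mono (Set.mem_Ioi.mpr one_pos)
          (Set.mem_Ioi.mpr (by linarith : (0:ℝ) < x)) (le_of_lt hx)
        simp only at this
        rw [hH1] at this
        linarith
    have := hmono (Set.mem_Ici.mpr le_rfl) (Set.mem_Ici.mpr h1) h1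
    rw [hF1] at this
    exact this
  · -- F antitone on (0, 1]
    have hanti : AntitoneOn F (Set.Ioc 0 1) := by
      have hint : interior (Set.Ioc (0:ℝ) 1) = Set.Ioo 0 1 := interior_Ioc
      apply antitoneOn_of_deriv_nonpos (convex_Ioc 0 1)
      · intro x hx
        have hx0 : x ≠ 0 := ne_of_gt hx.1
        exact ((entcomp_hasDerivAt_F x hx0).continuousAt).continuousWithinAt
      · rw [hint]
        intro x hx
        exact ((entcomp_hasDerivAt_F x (ne_of_gt hx.1)).differentiableAt).differentiableWithinAt
      · rw [hint]
        intro x hx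
        rw [(entcomp_hasDerivAt_F x (ne_of_gt hx.1)).deriv]
        have := entcomp_H_mono (Set.mem_Ioi.mpr hx.1)
          (Set.mem_Ioi.mpr one_pos) (le_of_lt hx.2)
        simp only at this
        rw [hH1] at this
        linarith
    have := hanti (Set.mem_Ioc.mpr ⟨hpos, le_of_lt h1⟩)
      (Set.mem_Ioc.mpr ⟨one_pos, le_rfl⟩) (le_of_lt h1)
    rw [hF1] at this
    exact this

theorem entropy_probability_comparison
    {Ω : Type*} [MeasurableSpace Ω] (ν : Measure Ω) [IsProbabilityMeasure ν]
    (f : Ω → ℝ) (hf_meas : Measurable f) (hf_nonneg : ∀ ω, 0 ≤ f ω)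
    (hf_int : Integrable f ν) (hf_one : ∫ ω, f ω ∂ν = 1)
    (hent_int : Integrable (fun ω => f ω * Real.log (f ω)) ν)
    (A : Set Ω) (hA : MeasurableSet A) :
    ∫ ω in A, f ω ∂ν ≤ (ν A).toReal + Real.sqrt (2 * ∫ ω, f ω * Real.log (f ω) ∂ν) := by
  set S : ℝ := ∫ ω, f ω * Real.log (f ω) ∂ν with hS
  set φ : Ω → ℝ := fun ω => f ω * Real.log (f ω) - f ω + 1 with hφ
  have hφ_int : Integrable φ ν := (hent_int.sub hf_int).add (integrable_const 1)
  have hφ_nonneg : ∀ ω, 0 ≤ φ ω := by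
    intro ω
    simp only [hφ]
    have hk := entcomp_key (f ω) (hf_nonneg ω)
    have h2u : (0:ℝ) < 2 * f ω + 4 := by linarith [hf_nonneg ω]
    nlinarith [hk, h2u, sq_nonneg (f ω - 1)]
  have hsub : Integrable (fun ω => f ω * Real.log (f ω) - f ω) ν := hent_int.sub hf_int
  have hφ_integral : ∫ ω, φ ω ∂ν = S := by
    simp only [hφ]
    rw [integral_add hsub (integrable_const 1),
      integral_sub hent_int hf_int, hf_one]
    simp [hS]
  have hS_nonneg : 0 ≤ S := by
    rw [← hφ_integral]
    exact integral_nonneg hφ_nonneg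
  -- key bound for every t > 0
  have hbound : ∀ t : ℝ, 0 < t → ∫ ω in A, f ω ∂ν ≤ (ν A).toReal + (t + S / (2 * t)) := by
    intro t ht
    set g : Ω → ℝ := fun ω => t / 3 * f ω + 2 * t / 3 + 1 / (2 * t) * φ ω with hg
    have hg1 : Integrable (fun ω => t / 3 * f ω) ν := hf_int.const_mul _
    have hg2 : Integrable (fun ω => t / 3 * f ω + 2 * t / 3) ν := hg1.add (integrable_const _)
    have hg3 : Integrable (fun ω => 1 / (2 * t) * φ ω) ν := hφ_int.const_mul _
    have hg_int : Integrable g ν := hg2.add hg3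
    have hg_nonneg : ∀ ω, 0 ≤ g ω := by
      intro ω
      have h1 := hf_nonneg ω
      have h2 := hφ_nonneg ω
      have : (0:ℝ) ≤ 1 / (2 * t) := by positivity
      simp only [hg]
      positivity
    have hptwise : ∀ ω, f ω - 1 ≤ g ω := by
      intro ω
      have hk := entcomp_key (f ω) (hf_nonneg ω)
      have hu0 := hf_nonneg ω
      simp only [hg, hφ]
      set u := f ω with hu
      set p := u * Real.log u - u + 1 with hp
      have h2u : (0:ℝ) < 2 * u + 4 := by linarith
      have hnum : 0 ≤ 2 * t ^ 2 * u + 4 * t ^ 2 + 3 * p - 6 * t * (u - 1) := by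
        by_contra hcon
        push_neg at hcon
        have hsq := sq_nonneg (t * (2 * u + 4) - 3 * (u - 1))
        have hprod := mul_pos h2u (neg_pos.mpr hcon)
        nlinarith [hk, hsq]
      rw [← sub_nonneg]
      have expand : t / 3 * u + 2 * t / 3 + 1 / (2 * t) * p - (u - 1) =
          (2 * t ^ 2 * u + 4 * t ^ 2 + 3 * p - 6 * t * (u - 1)) / (6 * t) := by
        field_simp
        ring
      rw [expand]
      exact div_nonneg hnum (by positivity)
    have step1 : ∫ ω in A, f ω ∂ν = (∫ ω in A, (f ω - 1) ∂ν) + (ν A).toReal := by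
      rw [integral_sub hf_int.integrableOn (integrable_const 1).integrableOn]
      simp [Measure.restrict_apply_univ, measureReal_def]
    have step2 : ∫ ω in A, (f ω - 1) ∂ν ≤ ∫ ω in A, g ω ∂ν := by
      apply setIntegral_mono_on (hf_int.sub (integrable_const 1)).integrableOn
        hg_int.integrableOn hA
      intro ω _
      exact hptwise ω
    have step3 : ∫ ω in A, g ω ∂ν ≤ ∫ ω, g ω ∂ν :=
      setIntegral_le_integral hg_int (Filter.Eventually.of_forall hg_nonneg)
    have step4 : ∫ ω, g ω ∂ν = t + S / (2 * t) := by
      simp only [hg]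
      rw [integral_add hg2 hg3, integral_add hg1 (integrable_const (2 * t / 3)),
        integral_const_mul, integral_const_mul, hf_one, hφ_integral, integral_const]
      simp only [measureReal_def, measure_univ, ENNReal.toReal_one, smul_eq_mul, one_mul]
      field_simp
      ring
    rw [step4] at step3
    rw [step1]
    linarith [step2, step3]
  rcases eq_or_lt_of_le hS_nonneg with hS0 | hSpos
  · rw [← hS0]
    simp only [mul_zero, Real.sqrt_zero, add_zero]
    apply le_of_forall_pos_le_add
    intro ε hε
    have := hbound ε hε
    rw [← hS0] at this
    simpa using this
  · have ht : (0:ℝ) < Real.sqrt (S / 2) := Real.sqrt_pos.mpr (by linarith)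
    have h2 : Real.sqrt (S / 2) * Real.sqrt (S / 2) = S / 2 :=
      Real.mul_self_sqrt (by linarith)
    have heq : Real.sqrt (S / 2) + S / (2 * Real.sqrt (S / 2)) = Real.sqrt (2 * S) := by
      set r := Real.sqrt (S / 2) with hr
      have h3 : Real.sqrt (2 * S) = 2 * r := by
        rw [show 2 * S = (2 * r) ^ 2 by nlinarith]
        exact Real.sqrt_sq (by positivity)
      rw [h3]
      field_simp
      nlinarith
    have := hbound (Real.sqrt (S / 2)) ht
    rw [heq] at this
    exact this
end

section
/- A priori bound on the free-convolution Stieltjes transform: if m : ℂ⁺ → ℂ⁺ satisfies m(z) = ∫ ρ(y) dy / (e^{−t/2} y − z − (1 − e^{−t}) m(z)) for a probability density ρ and some t > 0, then |m(z)| ≤ (1 − e^{−t})^{−1/2} for all z ∈ ℂ⁺. -/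
open MeasureTheory Complex

theorem apriori_bound_free_convolution_stieltjes
    (ρ : ℝ → ℝ) (hρ_nonneg : ∀ y, 0 ≤ ρ y) (hρ_int : Integrable ρ)
    (hρ_prob : ∫ y : ℝ, ρ y = 1)
    (t : ℝ) (ht : 0 < t)
    (m : ℂ → ℂ)
    (hm_im : ∀ z : ℂ, 0 < z.im → 0 < (m z).im)
    (hm_eq : ∀ z : ℂ, 0 < z.im →
      m z = ∫ y : ℝ, (ρ y : ℂ) /
        ((Real.exp (-t / 2) * y : ℝ) - z - (1 - Real.exp (-t)) * m z)) :
    ∀ z : ℂ, 0 < z.im → ‖m z‖ ≤ (1 - Real.exp (-t)) ^ (-(1 : ℝ) / 2) := by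
  intro z hz
  have hσ : 0 < 1 - Real.exp (-t) := by
    have h1 : Real.exp (-t) < 1 := by
      rw [Real.exp_lt_one_iff]; linarith
    linarith
  set σ : ℝ := 1 - Real.exp (-t) with hσdef
  set a : ℝ := Real.exp (-t / 2) with hadef
  have hmim := hm_im z hz
  set w : ℂ := z + (σ : ℂ) * m z with hwdef
  have hwim : w.im = z.im + σ * (m z).im := by
    simp [hwdef, Complex.add_im, Complex.mul_im]
  have hb : 0 < w.im := by rw [hwim]; positivity
  set b : ℝ := w.im with hbdef
  set den : ℝ → ℂ := fun y => ((a * y : ℝ) : ℂ) - w with hdendef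
  have hden_eq : ∀ y : ℝ, ((a * y : ℝ) : ℂ) - z - (1 - Real.exp (-t)) * m z = den y := by
    intro y
    simp only [hdendef, hwdef, hσdef]
    push_cast
    ring
  have hden_im : ∀ y, (den y).im = -b := by
    intro y
    simp [hdendef, Complex.sub_im, Complex.ofReal_im]
    rfl
  have habs : ∀ y, b ≤ ‖den y‖ := by
    intro y
    calc b = |(den y).im| := by rw [hden_im y, abs_neg, abs_of_pos hb]
    _ ≤ ‖den y‖ := Complex.abs_im_le_norm _
  have habs_pos : ∀ y, 0 < ‖den y‖ := fun y => lt_of_lt_of_le hb (habs y)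
  have hden_ne : ∀ y, den y ≠ 0 := by
    intro y h
    have := habs_pos y
    rw [h] at this
    simp at this
  -- measurability
  have hden_cont : Continuous den := by
    exact (Complex.continuous_ofReal.comp (continuous_const.mul continuous_id)).sub
      continuous_const
  have hinv_cont : Continuous fun y => (den y)⁻¹ := hden_cont.inv₀ hden_ne
  set f : ℝ → ℂ := fun y => (ρ y : ℂ) / den y with hfdef
  have hf_meas : AEStronglyMeasurable f volume := by
    have h1 : AEStronglyMeasurable (fun y => (ρ y : ℂ)) volume :=
      Complex.continuous_ofReal.comp_aestronglyMeasurable hρ_int.aestronglyMeasurable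
    simpa [hfdef, div_eq_mul_inv, Pi.mul_def] using h1.mul hinv_cont.aestronglyMeasurable
  have hf_norm : ∀ y, ‖f y‖ = ρ y / ‖den y‖ := by
    intro y
    simp only [hfdef, norm_div, Complex.norm_real, Real.norm_eq_abs,
      _root_.abs_of_nonneg (hρ_nonneg y)]
  have hf_int : Integrable f := by
    refine (hρ_int.div_const b).mono' hf_meas ?_
    filter_upwards with y
    rw [hf_norm y]
    gcongr
    · exact hρ_nonneg y
    · exact habs y
  -- the two real integrals
  set g1 : ℝ → ℝ := fun y => ρ y / ‖den y‖ with hg1def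
  set g2 : ℝ → ℝ := fun y => ρ y / ‖den y‖ ^ 2 with hg2def
  have hg1_meas : AEStronglyMeasurable g1 volume := by
    have : AEStronglyMeasurable (fun y => (‖den y‖)⁻¹) volume :=
      ((continuous_norm.comp hden_cont).inv₀
        (fun y => (habs_pos y).ne')).aestronglyMeasurable
    simpa [hg1def, div_eq_mul_inv, Pi.mul_def] using hρ_int.aestronglyMeasurable.mul this
  have hg2_meas : AEStronglyMeasurable g2 volume := by
    have : AEStronglyMeasurable (fun y => ((‖den y‖) ^ 2)⁻¹) volume :=
      (((continuous_norm.comp hden_cont).pow 2).inv₀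
        (fun y => (pow_pos (habs_pos y) 2).ne')).aestronglyMeasurable
    simpa [hg2def, div_eq_mul_inv, Pi.mul_def] using hρ_int.aestronglyMeasurable.mul this
  have hg1_nonneg : ∀ y, 0 ≤ g1 y := fun y => div_nonneg (hρ_nonneg y) (habs_pos y).le
  have hg2_nonneg : ∀ y, 0 ≤ g2 y := fun y =>
    div_nonneg (hρ_nonneg y) (pow_pos (habs_pos y) 2).le
  have hg1_int : Integrable g1 := by
    refine (hρ_int.div_const b).mono' hg1_meas ?_
    filter_upwards with y
    rw [Real.norm_eq_abs, _root_.abs_of_nonneg (hg1_nonneg y)]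
    simp only [hg1def]
    gcongr
    · exact hρ_nonneg y
    · exact habs y
  have hg2_int : Integrable g2 := by
    refine (hρ_int.div_const (b ^ 2)).mono' hg2_meas ?_
    filter_upwards with y
    rw [Real.norm_eq_abs, _root_.abs_of_nonneg (hg2_nonneg y)]
    simp only [hg2def]
    gcongr
    · exact hρ_nonneg y
    · exact habs y
  -- m z = ∫ f
  have hm_int : m z = ∫ y, f y := by
    rw [hm_eq z hz]
    congr 1
    funext y
    rw [hden_eq y]
  -- imaginary part
  have him : (m z).im = b * ∫ y, g2 y := by
    have himswap : (∫ y, f y).im = ∫ y, (f y).im := by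
      rw [← RCLike.im_eq_complex_im, ← integral_im hf_int]
    rw [hm_int, himswap, ← integral_const_mul]
    congr 1
    funext y
    have : (f y).im = ρ y * b / Complex.normSq (den y) := by
      simp only [hfdef, Complex.div_im, Complex.ofReal_im, Complex.ofReal_re, hden_im y]
      ring
    rw [this, Complex.normSq_eq_norm_sq]
    simp only [hg2def]
    ring
  set I2 : ℝ := ∫ y, g2 y with hI2def
  have hI2_nonneg : 0 ≤ I2 := integral_nonneg hg2_nonneg
  -- I2 ≤ 1/σ
  have hbge : σ * (m z).im ≤ b := by have := hwim; linarith
  have hI2_le : I2 ≤ 1 / σ := by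
    have h1 : σ * (m z).im * I2 ≤ b * I2 := by
      apply mul_le_mul_of_nonneg_right hbge hI2_nonneg
    rw [← him] at h1
    -- σ * Im m * I2 ≤ Im m, Im m > 0
    have h2 : σ * I2 ≤ 1 := by
      by_contra h
      push_neg at h
      nlinarith
    rw [le_div_iff₀ hσ]
    linarith [mul_comm σ I2]
  -- |m z| ≤ ∫ g1
  have habs_le : ‖m z‖ ≤ ∫ y, g1 y := by
    rw [hm_int]
    calc ‖∫ y, f y‖ = ‖∫ y, f y‖ := rfl
    _ ≤ ∫ y, ‖f y‖ := norm_integral_le_integral_norm f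
    _ = ∫ y, g1 y := by congr 1; funext y; rw [hf_norm y]
  set I1 : ℝ := ∫ y, g1 y with hI1def
  have hI1_nonneg : 0 ≤ I1 := integral_nonneg hg1_nonneg
  -- Cauchy-Schwarz : I1^2 ≤ I2
  have hCS : I1 ^ 2 ≤ I2 := by
    set F : ℝ → ENNReal := fun y => ENNReal.ofReal (Real.sqrt (ρ y)) with hFdef
    set G : ℝ → ENNReal := fun y => ENNReal.ofReal (Real.sqrt (ρ y) / ‖den y‖)
      with hGdef
    have hsqrt_meas : AEMeasurable (fun y => Real.sqrt (ρ y)) volume :=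
      Real.continuous_sqrt.measurable.comp_aemeasurable hρ_int.aemeasurable
    have hF_meas : AEMeasurable F volume := ENNReal.measurable_ofReal.comp_aemeasurable hsqrt_meas
    have hG_meas : AEMeasurable G volume := by
      apply ENNReal.measurable_ofReal.comp_aemeasurable
      exact hsqrt_meas.div ((continuous_norm.comp hden_cont).measurable.aemeasurable)
    have hpq : (2 : ℝ).HolderConjugate 2 := by
      constructor <;> norm_num
    have key := ENNReal.lintegral_mul_le_Lp_mul_Lq volume hpq hF_meas hG_meas
    have hFG : ∀ y, (F * G) y = ENNReal.ofReal (g1 y) := by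
      intro y
      simp only [Pi.mul_apply, hFdef, hGdef, hg1def]
      rw [← ENNReal.ofReal_mul (Real.sqrt_nonneg _)]
      congr 1
      rw [mul_div_assoc', Real.mul_self_sqrt (hρ_nonneg y)]
    have hF2 : ∀ y, F y ^ (2 : ℝ) = ENNReal.ofReal (ρ y) := by
      intro y
      simp only [hFdef]
      rw [ENNReal.ofReal_rpow_of_nonneg (Real.sqrt_nonneg _) (by norm_num : (0:ℝ) ≤ 2)]
      congr 1
      rw [show ((2:ℝ)) = ((2:ℕ):ℝ) by norm_num, Real.rpow_natCast]
      exact Real.sq_sqrt (hρ_nonneg y)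
    have hG2 : ∀ y, G y ^ (2 : ℝ) = ENNReal.ofReal (g2 y) := by
      intro y
      simp only [hGdef]
      rw [ENNReal.ofReal_rpow_of_nonneg
        (div_nonneg (Real.sqrt_nonneg _) (habs_pos y).le) (by norm_num : (0:ℝ) ≤ 2)]
      congr 1
      rw [show ((2:ℝ)) = ((2:ℕ):ℝ) by norm_num, Real.rpow_natCast, div_pow,
        Real.sq_sqrt (hρ_nonneg y)]
    simp only [hFG, hF2, hG2] at key
    rw [← ofReal_integral_eq_lintegral_ofReal hg1_int
        (Filter.Eventually.of_forall hg1_nonneg),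
      ← ofReal_integral_eq_lintegral_ofReal hρ_int
        (Filter.Eventually.of_forall hρ_nonneg),
      ← ofReal_integral_eq_lintegral_ofReal hg2_int
        (Filter.Eventually.of_forall hg2_nonneg), hρ_prob] at key
    simp only [ENNReal.ofReal_one, ENNReal.one_rpow, one_mul] at key
    rw [ENNReal.ofReal_rpow_of_nonneg hI2_nonneg (by norm_num : (0:ℝ) ≤ 1/2)] at key
    have hle : I1 ≤ I2 ^ ((1 : ℝ) / 2) := by
      have := (ENNReal.ofReal_le_ofReal_iff (Real.rpow_nonneg hI2_nonneg _)).mp key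
      simpa using this
    calc I1 ^ 2 ≤ (I2 ^ ((1 : ℝ) / 2)) ^ 2 := by
          apply pow_le_pow_left₀ hI1_nonneg hle
    _ = I2 := by
          rw [← Real.rpow_natCast (I2 ^ ((1:ℝ)/2)) 2, ← Real.rpow_mul hI2_nonneg]
          norm_num
  -- conclude
  have hfinal : ‖m z‖ ^ 2 ≤ 1 / σ := by
    calc ‖m z‖ ^ 2 ≤ I1 ^ 2 := by
          apply pow_le_pow_left₀ (norm_nonneg _) habs_le
    _ ≤ I2 := hCS
    _ ≤ 1 / σ := hI2_le
  have hgoal : (σ : ℝ) ^ (-(1 : ℝ) / 2) = Real.sqrt (1 / σ) := by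
    rw [neg_div, Real.rpow_neg hσ.le, ← Real.sqrt_eq_rpow, one_div, Real.sqrt_inv]
  rw [hgoal]
  exact (Real.le_sqrt (norm_nonneg _) (div_nonneg zero_le_one hσ.le)).mpr hfinal
end
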